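/- Assume r ≥ 1/2. Then λ = max( min( d/(1+ρ), 1/4, (r−d)/(2r−1+ρ) ), 0 ) is a nonnegative eigenvalue of the four-variable system (S), i.e. there exists y ∈ ℝ^4 such that (λ, y) is a solution of (S). -/

import Mathlib

lemma auxkey (nr mr p q Bn Bm S lam : ℝ)
    (hn : 2 ≤ nr) (hm : 2 ≤ mr) (hmn : mr ≤ nr + 1)
    (hp : 0 ≤ p) (hq : 0 ≤ q) (hpq : p + q ≤ 1)
    (hBn0 : 0 ≤ Bn) (hBn1 : Bn ≤ nr - 1) (hBm0 : 0 ≤ Bm) (hBm1 : Bm ≤ mr - 1)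
    (hS : S = Bn + Bm + p + q)
    (hlam : lam = max (min (S / (nr + mr)) (min (1/4) ((nr - S) / (nr - mr + 2)))) 0) :
    0 ≤ lam ∧ ∃ y1 yn yn1 ynm : ℝ,
      (yn = min ((1 - (p + q)) - 2*lam + y1 + yn1 - ynm) (Bn - (nr - 1)*lam + y1) ∧
       ynm = min ((1 - (p + q)) - lam + y1 + yn1 - yn) (Bm - (mr - 1)*lam + yn1) ∧
       y1 = min (p - lam + (yn + ynm)/2) (((nr - 1) - Bn) - (nr - 1)*lam + yn) ∧
       yn1 = min (q - lam + (yn + ynm)/2) (((mr - 1) - Bm) - (mr - 1)*lam + ynm)) := by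
  have hnm : (0:ℝ) < nr + mr := by linarith
  have hd2 : (0:ℝ) < nr - mr + 2 := by linarith
  have hlam0 : 0 ≤ lam := hlam ▸ le_max_right _ _
  refine ⟨hlam0, ?_⟩
  rcases le_total (S / (nr + mr)) (min (1/4) ((nr - S) / (nr - mr + 2))) with hD | hmin
  · -- Case D : lam = S/(nr+mr)
    have hS0 : 0 ≤ S := by linarith
    have hld : lam = S / (nr + mr) := by
      rw [hlam, min_eq_left hD, max_eq_left (by positivity)]
    have hEq : (nr + mr) * lam = S := by
      rw [hld]; field_simp
    have h14 : lam ≤ 1/4 := by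
      rw [hld]; exact hD.trans (min_le_left _ _)
    refine ⟨0, Bn - (nr - 1)*lam, q - p, (nr + 1)*lam - 2*p - Bn, ?_, ?_, ?_, ?_⟩
    · rw [min_eq_right (by linarith)]; ring
    · rw [min_eq_right (by linarith)]; linarith
    · rw [min_eq_left (by linarith [mul_nonneg (by linarith : (0:ℝ) ≤ nr - 1) (by linarith : (0:ℝ) ≤ 1 - 2*lam)])]
      ring
    · rw [min_eq_left (by linarith [mul_nonneg (by linarith : (0:ℝ) ≤ mr - 1) (by linarith : (0:ℝ) ≤ 1 - 2*lam)])]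
      ring
  · rcases le_total (1/4 : ℝ) ((nr - S) / (nr - mr + 2)) with hQ | hR
    · -- Case Q : lam = 1/4
      have hlq : lam = 1/4 := by
        rw [hlam, min_eq_right hmin, min_eq_left hQ, max_eq_left (by norm_num)]
      have hmin' : (1/4 : ℝ) ≤ S / (nr + mr) := by
        rwa [min_eq_left hQ] at hmin
      have c1 : (1/4) * (nr + mr) ≤ S := (le_div_iff₀ hnm).mp hmin'
      have c2 : (1/4) * (nr - mr + 2) ≤ nr - S := (le_div_iff₀ hd2).mp hQ
      refine ⟨0, (mr + 1)*lam - p - q - Bm, q - p, Bm - (mr - 1)*lam + (q - p), ?_, ?_, ?_, ?_⟩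
      · rw [hlq]; rw [min_eq_left (by linarith)]; ring
      · rw [hlq]; rw [min_eq_right (by linarith)]
      · rw [hlq]; rw [min_eq_left (by linarith)]; ring
      · rw [hlq]; rw [min_eq_left (by linarith)]; ring
    · -- Cases R and Z
      have hminR : min (1/4 : ℝ) ((nr - S) / (nr - mr + 2)) = (nr - S) / (nr - mr + 2) :=
        min_eq_right hR
      rcases le_total 0 ((nr - S) / (nr - mr + 2)) with h0R | h0R
      · -- Case R : lam = (nr - S)/(nr - mr + 2)
        have hlr : lam = (nr - S) / (nr - mr + 2) := by
          rw [hlam, min_eq_right hmin, hminR, max_eq_left h0R]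
        have hEq : (nr - mr + 2) * lam = nr - S := by
          rw [hlr]; field_simp
        have h14 : lam ≤ 1/4 := hlr ▸ hR
        refine ⟨0, (nr - 1)*lam - (nr - 1) + Bn,
            Bm + 2*q - (mr + 1)*lam + ((nr - 1)*lam - (nr - 1) + Bn),
            2*Bm + 2*q - 2*mr*lam + ((nr - 1)*lam - (nr - 1) + Bn), ?_, ?_, ?_, ?_⟩
        · rw [min_eq_left (by linarith [mul_nonneg (by linarith : (0:ℝ) ≤ nr - 1) (by linarith : (0:ℝ) ≤ 1 - 2*lam)])]
          linarith
        · rw [min_eq_right (by linarith)]; ring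
        · rw [min_eq_right (by linarith)]; ring
        · rw [min_eq_left (by linarith [mul_nonneg (by linarith : (0:ℝ) ≤ mr - 1) (by linarith : (0:ℝ) ≤ 1 - 2*lam)])]
          ring
      · -- Case Z : lam = 0
        have hlz : lam = 0 := by
          rw [hlam, min_eq_right hmin, hminR, max_eq_right h0R]
        have hSn : nr ≤ S := by
          by_contra h
          push_neg at h
          have : 0 < (nr - S) / (nr - mr + 2) := div_pos (by linarith) hd2
          linarith
        refine ⟨0, Bn - (nr - 1), 1 - p + q, nr + 1 - 2*p - Bn, ?_, ?_, ?_, ?_⟩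
        · rw [hlz]; rw [min_eq_left (by linarith)]; ring
        · rw [hlz]; rw [min_eq_left (by linarith)]; ring
        · rw [hlz]; rw [min_eq_right (by linarith)]; ring
        · rw [hlz]; rw [min_eq_left (by linarith)]; ring


open Finset

/-- The four-variable system (S), with variables `y1 = y_1`, `yn = y_n`,
`yn1 = y_{n+1}`, `ynm = y_{n+m}`. -/
def Ssol (n m : ℕ) (a : ℕ → ℝ) (lam y1 yn yn1 ynm : ℝ) : Prop :=
  yn = min ((1 - (a n + a (n + m))) - 2 * lam + y1 + yn1 - ynm)
      ((∑ i ∈ Finset.Icc 1 (n - 1), a i) - ((n : ℝ) - 1) * lam + y1) ∧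
  ynm = min ((1 - (a n + a (n + m))) - lam + y1 + yn1 - yn)
      ((∑ i ∈ Finset.Icc (n + 1) (n + m - 1), a i) - ((m : ℝ) - 1) * lam + yn1) ∧
  y1 = min (a n - lam + (yn + ynm) / 2)
      ((∑ i ∈ Finset.Icc 1 (n - 1), (1 - a i)) - ((n : ℝ) - 1) * lam + yn) ∧
  yn1 = min (a (n + m) - lam + (yn + ynm) / 2)
      ((∑ i ∈ Finset.Icc (n + 1) (n + m - 1), (1 - a i)) - ((m : ℝ) - 1) * lam + ynm)

theorem stmt11 (n m : ℕ) (hn : 2 ≤ n) (hm : 2 ≤ m) (a : ℕ → ℝ)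
    (ha : ∀ i : ℕ, 1 ≤ i → i ≤ n + m → 0 ≤ a i ∧ a i ≤ 1)
    (hprio : a n + a (n + m) ≤ 1)
    (d r ρ : ℝ) (hd : d = (∑ i ∈ Finset.Icc 1 (n + m), a i) / ((n : ℝ) + (m : ℝ) - 1))
    (hr : r = (n : ℝ) / ((n : ℝ) + (m : ℝ) - 1))
    (hρ : ρ = 1 / ((n : ℝ) + (m : ℝ) - 1))
    (hr2 : 1 / 2 ≤ r)
    (lam : ℝ)
    (hlam : lam = max (min (d / (1 + ρ)) (min (1 / 4) ((r - d) / (2 * r - 1 + ρ)))) 0) :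
    0 ≤ lam ∧ ∃ y1 yn yn1 ynm : ℝ, Ssol n m a lam y1 yn yn1 ynm := by
  have hn1 : 1 ≤ n := by omega
  have hnR : (2:ℝ) ≤ (n:ℝ) := by exact_mod_cast hn
  have hmR : (2:ℝ) ≤ (m:ℝ) := by exact_mod_cast hm
  have hN : (0:ℝ) < (n:ℝ) + (m:ℝ) - 1 := by linarith
  have hN0 : ((n:ℝ) + (m:ℝ) - 1) ≠ 0 := ne_of_gt hN
  have hmn : (m:ℝ) ≤ (n:ℝ) + 1 := by
    rw [hr] at hr2
    have := (le_div_iff₀ hN).mp hr2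
    linarith
  have hd2 : (0:ℝ) < (n:ℝ) - (m:ℝ) + 2 := by linarith
  have hnmpos : (0:ℝ) < (n:ℝ) + (m:ℝ) := by linarith
  set Bn := ∑ i ∈ Finset.Icc 1 (n - 1), a i with hBndef
  set Bm := ∑ i ∈ Finset.Icc (n + 1) (n + m - 1), a i with hBmdef
  set S := ∑ i ∈ Finset.Icc 1 (n + m), a i with hSdef
  have eIcc : ∀ k : ℕ, Finset.Icc 1 k = Finset.Ioc 0 k := by
    intro k; ext x; simp only [Finset.mem_Icc, Finset.mem_Ioc]; omega
  have eIcc2 : Finset.Icc (n + 1) (n + m - 1) = Finset.Ioc n (n + m - 1) := by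
    ext x; simp only [Finset.mem_Icc, Finset.mem_Ioc]; omega
  have h1 : (∑ i ∈ Finset.Ioc 0 n, a i) + ∑ i ∈ Finset.Ioc n (n + m), a i
      = ∑ i ∈ Finset.Ioc 0 (n + m), a i :=
    Finset.sum_Ioc_consecutive _ (Nat.zero_le n) (Nat.le_add_right n m)
  have h2 : ∑ i ∈ Finset.Ioc 0 (n - 1 + 1), a i
      = (∑ i ∈ Finset.Ioc 0 (n - 1), a i) + a (n - 1 + 1) :=
    Finset.sum_Ioc_succ_top (Nat.zero_le _) _
  have h3 : ∑ i ∈ Finset.Ioc n (n + m - 1 + 1), a i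
      = (∑ i ∈ Finset.Ioc n (n + m - 1), a i) + a (n + m - 1 + 1) :=
    Finset.sum_Ioc_succ_top (by omega) _
  have en : n - 1 + 1 = n := by omega
  have enm : n + m - 1 + 1 = n + m := by omega
  rw [en] at h2
  rw [enm] at h3
  have hBn' : Bn = ∑ i ∈ Finset.Ioc 0 (n - 1), a i := by rw [hBndef, eIcc]
  have hBm' : Bm = ∑ i ∈ Finset.Ioc n (n + m - 1), a i := by rw [hBmdef, eIcc2]
  have hS' : S = ∑ i ∈ Finset.Ioc 0 (n + m), a i := by rw [hSdef, eIcc]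
  have hsplit : S = Bn + Bm + a n + a (n + m) := by
    rw [hS', hBn', hBm', ← h1, h2, h3]; ring
  -- bar sums
  have hcard1 : (Finset.Icc 1 (n - 1)).card = n - 1 := by
    rw [Nat.card_Icc]; omega
  have hcard2 : (Finset.Icc (n + 1) (n + m - 1)).card = m - 1 := by
    rw [Nat.card_Icc]; omega
  have hbar1 : ∑ i ∈ Finset.Icc 1 (n - 1), (1 - a i) = ((n:ℝ) - 1) - Bn := by
    rw [Finset.sum_sub_distrib, Finset.sum_const, hcard1, nsmul_eq_mul, mul_one,
      Nat.cast_sub hn1, Nat.cast_one]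
  have hbar2 : ∑ i ∈ Finset.Icc (n + 1) (n + m - 1), (1 - a i) = ((m:ℝ) - 1) - Bm := by
    rw [Finset.sum_sub_distrib, Finset.sum_const, hcard2, nsmul_eq_mul, mul_one,
      Nat.cast_sub (by omega : 1 ≤ m), Nat.cast_one]
  -- bounds
  have hBn0 : 0 ≤ Bn := Finset.sum_nonneg fun i hi => by
    have := Finset.mem_Icc.mp hi
    exact (ha i this.1 (by omega)).1
  have hBm0 : 0 ≤ Bm := Finset.sum_nonneg fun i hi => by
    have := Finset.mem_Icc.mp hi
    exact (ha i (by omega) (by omega)).1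
  have hBn1 : Bn ≤ (n:ℝ) - 1 := by
    have : Bn ≤ ∑ _i ∈ Finset.Icc 1 (n - 1), (1:ℝ) := by
      refine Finset.sum_le_sum fun i hi => ?_
      have := Finset.mem_Icc.mp hi
      exact (ha i this.1 (by omega)).2
    rw [Finset.sum_const, hcard1, nsmul_eq_mul, mul_one, Nat.cast_sub hn1,
      Nat.cast_one] at this
    exact this
  have hBm1 : Bm ≤ (m:ℝ) - 1 := by
    have : Bm ≤ ∑ _i ∈ Finset.Icc (n + 1) (n + m - 1), (1:ℝ) := by
      refine Finset.sum_le_sum fun i hi => ?_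
      have := Finset.mem_Icc.mp hi
      exact (ha i (by omega) (by omega)).2
    rw [Finset.sum_const, hcard2, nsmul_eq_mul, mul_one,
      Nat.cast_sub (by omega : 1 ≤ m), Nat.cast_one] at this
    exact this
  have han := ha n hn1 (by omega)
  have hanm := ha (n + m) (by omega) le_rfl
  -- rewrite lam
  have h1ρ : (0:ℝ) < 1 + ρ := by
    rw [hρ]; positivity
  have e1 : d / (1 + ρ) = S / ((n:ℝ) + (m:ℝ)) := by
    rw [div_eq_div_iff h1ρ.ne' hnmpos.ne', hd, hρ]
    field_simp
    ring
  have hA : (0:ℝ) < 2 * r - 1 + ρ := by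
    have hv : 2 * r - 1 + ρ = ((n:ℝ) - (m:ℝ) + 2) / ((n:ℝ) + (m:ℝ) - 1) := by
      rw [hr, hρ]; field_simp; ring
    rw [hv]; exact div_pos hd2 hN
  have e2 : (r - d) / (2 * r - 1 + ρ) = ((n:ℝ) - S) / ((n:ℝ) - (m:ℝ) + 2) := by
    rw [div_eq_div_iff hA.ne' hd2.ne', hr, hd, hρ]
    field_simp
    ring
  have hlam' : lam = max (min (S / ((n:ℝ) + (m:ℝ)))
      (min (1/4) (((n:ℝ) - S) / ((n:ℝ) - (m:ℝ) + 2)))) 0 := by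
    rw [hlam, e1, e2]
  obtain ⟨h0, y1, yn, yn1, ynm, H1, H2, H3, H4⟩ :=
    auxkey (n:ℝ) (m:ℝ) (a n) (a (n + m)) Bn Bm S lam hnR hmR hmn
      han.1 hanm.1 hprio hBn0 hBn1 hBm0 hBm1 (by linarith) hlam'
  refine ⟨h0, y1, yn, yn1, ynm, H1, H2, ?_, ?_⟩
  · rw [hbar1]; exact H3
  · rw [hbar2]; exact H4
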